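/- Let W' be a reflection subgroup of W. Then for each i ∈ {1,2}, Φ_i(W') = W'·Δ_i(W'); that is, every root of Φ_i whose reflection lies in W' is obtained by applying an element of W' to a root in Δ_i(W'). -/

import Mathlib

open Pointwise

/-- The positive linear cone of a subset `A` of a real vector space: finite linear
combinations of elements of `A` with all coefficients nonnegative and at least one
strictly positive. -/
def PLC {V : Type*} [AddCommGroup V] [Module ℝ V] (A : Set V) : Set V :=
  { v | ∃ c : V →₀ ℝ, (∀ a, 0 ≤ c a) ∧ ↑c.support ⊆ A ∧ c ≠ 0 ∧
          v = c.sum fun a t => t • a }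

/-- `altEnd a b m` is the alternating product `⋯ a b a b` … of `m` factors,
ending with `b` (e.g. `altEnd a b 3 = b * a * b`). -/
def altEnd {G : Type*} [Monoid G] : G → G → ℕ → G
  | _, _, 0 => 1
  | a, b, m + 1 => altEnd b a m * b

/-- The class of `z` under the equivalence "being nonzero scalar multiples of each
other" (the class `ẑ`). -/
def rayClass {V : Type*} [AddCommGroup V] [Module ℝ V] (z : V) : Set V :=
  { v | ∃ c : ℝ, c ≠ 0 ∧ v = c • z }

/-- The set `Â = {ẑ : z ∈ A}` of scalar-equivalence classes of elements of `A`. -/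
def rayClasses {V : Type*} [AddCommGroup V] [Module ℝ V] (A : Set V) : Set (Set V) :=
  { C | ∃ z ∈ A, C = rayClass z }

/-- A Coxeter datum `(S, V₁, V₂, Π₁, Π₂, ⟨·,·⟩)` satisfying (D1)–(D5), together with
its associated abstract Coxeter group `W` (a group generated by involutions
`r s`, acting faithfully on `V₁` and `V₂` in the prescribed way, with the pairing
`W`-invariant), the decomposition `Φᵢ = Φᵢ⁺ ⊎ Φᵢ⁻` of the paired root systems, the
`W`-equivariant bijection `φ : Φ₁ → Φ₂` (with inverse `phiInv`), and the reflections
`r_x ∈ T` attached to the roots `x ∈ Φ₁` (`refl₁`) resp. `y ∈ Φ₂` (`refl₂`). -/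
structure CoxeterDatum (S : Type*) (V₁ : Type*) (V₂ : Type*) (W : Type*)
    [AddCommGroup V₁] [Module ℝ V₁] [AddCommGroup V₂] [Module ℝ V₂] [Group W] where
  pair : V₁ →ₗ[ℝ] V₂ →ₗ[ℝ] ℝ
  α : S → V₁
  β : S → V₂
  α_inj : Function.Injective α
  β_inj : Function.Injective β
  D1 : ∀ s, pair (α s) (β s) = 1
  D2a : (0 : V₁) ∉ PLC (Set.range α)
  D2b : (0 : V₂) ∉ PLC (Set.range β)
  D2c : ∀ s, α s ∉ PLC (Set.range α \ {α s})
  D2d : ∀ s, β s ∉ PLC (Set.range β \ {β s})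
  D3 : ∀ s t, s ≠ t → pair (α s) (β t) ≤ 0
  D4 : ∀ s t, pair (α s) (β t) = 0 → pair (α t) (β s) = 0
  D5 : ∀ s t, s ≠ t →
    (∃ m : ℕ, 2 ≤ m ∧ pair (α s) (β t) * pair (α t) (β s) = Real.cos (Real.pi / m) ^ 2) ∨
      1 ≤ pair (α s) (β t) * pair (α t) (β s)
  /-- the Coxeter generators `R = {r s : s ∈ S}` of `W` -/
  r : S → W
  r_gen : Subgroup.closure (Set.range r) = ⊤
  r_ne_one : ∀ s, r s ≠ 1
  r_sq : ∀ s, r s * r s = 1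
  /-- the faithful action of `W` on `V₁` -/
  ρ₁ : W →* Module.End ℝ V₁
  /-- the faithful action of `W` on `V₂` -/
  ρ₂ : W →* Module.End ℝ V₂
  ρ₁_inj : Function.Injective ρ₁
  ρ₂_inj : Function.Injective ρ₂
  hr₁ : ∀ s x, ρ₁ (r s) x = x - (2 * pair x (β s)) • α s
  hr₂ : ∀ s y, ρ₂ (r s) y = y - (2 * pair (α s) y) • β s
  pair_inv : ∀ w x y, pair (ρ₁ w x) (ρ₂ w y) = pair x y
  /-- the `W`-equivariant bijection `φ : Φ₁ → Φ₂` -/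
  phi : V₁ → V₂
  /-- the inverse `φ⁻¹ : Φ₂ → Φ₁` -/
  phiInv : V₂ → V₁
  /-- the reflection `r_x` corresponding to a root `x ∈ Φ₁` -/
  refl₁ : V₁ → W
  /-- the reflection `r_y` corresponding to a root `y ∈ Φ₂` -/
  refl₂ : V₂ → W
  decomp₁ : { v | ∃ w s, v = ρ₁ w (α s) } =
      ({ v | ∃ w s, v = ρ₁ w (α s) } ∩ PLC (Set.range α)) ∪
        (-({ v | ∃ w s, v = ρ₁ w (α s) } ∩ PLC (Set.range α)))
  disj₁ : Disjoint ({ v | ∃ w s, v = ρ₁ w (α s) } ∩ PLC (Set.range α))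
      (-({ v | ∃ w s, v = ρ₁ w (α s) } ∩ PLC (Set.range α)))
  decomp₂ : { v | ∃ w s, v = ρ₂ w (β s) } =
      ({ v | ∃ w s, v = ρ₂ w (β s) } ∩ PLC (Set.range β)) ∪
        (-({ v | ∃ w s, v = ρ₂ w (β s) } ∩ PLC (Set.range β)))
  disj₂ : Disjoint ({ v | ∃ w s, v = ρ₂ w (β s) } ∩ PLC (Set.range β))
      (-({ v | ∃ w s, v = ρ₂ w (β s) } ∩ PLC (Set.range β)))
  phi_mem : ∀ x ∈ { v | ∃ w s, v = ρ₁ w (α s) }, phi x ∈ { v | ∃ w s, v = ρ₂ w (β s) }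
  phiInv_mem : ∀ y ∈ { v | ∃ w s, v = ρ₂ w (β s) }, phiInv y ∈ { v | ∃ w s, v = ρ₁ w (α s) }
  phiInv_phi : ∀ x ∈ { v | ∃ w s, v = ρ₁ w (α s) }, phiInv (phi x) = x
  phi_phiInv : ∀ y ∈ { v | ∃ w s, v = ρ₂ w (β s) }, phi (phiInv y) = y
  phi_simple : ∀ s, phi (α s) = β s
  phi_equiv : ∀ w, ∀ x ∈ { v | ∃ w s, v = ρ₁ w (α s) }, phi (ρ₁ w x) = ρ₂ w (phi x)
  refl₁_eq : ∀ w s, refl₁ (ρ₁ w (α s)) = w * r s * w⁻¹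
  refl₂_eq : ∀ w s, refl₂ (ρ₂ w (β s)) = w * r s * w⁻¹
  refl₁_act : ∀ x ∈ { v | ∃ w s, v = ρ₁ w (α s) }, ∀ v,
      ρ₁ (refl₁ x) v = v - (2 * pair v (phi x)) • x
  refl₂_act : ∀ y ∈ { v | ∃ w s, v = ρ₂ w (β s) }, ∀ v,
      ρ₂ (refl₂ y) v = v - (2 * pair (phiInv y) v) • y

namespace CoxeterDatum

variable {S V₁ V₂ W : Type*} [AddCommGroup V₁] [Module ℝ V₁]
  [AddCommGroup V₂] [Module ℝ V₂] [Group W]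

variable (D : CoxeterDatum S V₁ V₂ W)

/-- The root system `Φ₁ = W Π₁`. -/
def Phi₁ : Set V₁ := { v | ∃ w s, v = D.ρ₁ w (D.α s) }

/-- The root system `Φ₂ = W Π₂`. -/
def Phi₂ : Set V₂ := { v | ∃ w s, v = D.ρ₂ w (D.β s) }

/-- The positive roots `Φ₁⁺ = Φ₁ ∩ PLC Π₁`. -/
def PhiPos₁ : Set V₁ := D.Phi₁ ∩ PLC (Set.range D.α)

/-- The positive roots `Φ₂⁺ = Φ₂ ∩ PLC Π₂`. -/
def PhiPos₂ : Set V₂ := D.Phi₂ ∩ PLC (Set.range D.β)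

/-- The negative roots `Φ₁⁻ = -Φ₁⁺`. -/
def PhiNeg₁ : Set V₁ := -D.PhiPos₁

/-- The negative roots `Φ₂⁻ = -Φ₂⁺`. -/
def PhiNeg₂ : Set V₂ := -D.PhiPos₂

/-- The set `T = ⋃_{w ∈ W} w R w⁻¹` of reflections of `W`. -/
def T : Set W := { t | ∃ w s, t = w * D.r s * w⁻¹ }

/-- The length function `ℓ` of `W` with respect to the Coxeter generators `R`. -/
noncomputable def len (w : W) : ℕ :=
  sInf { n | ∃ l : List S, l.length = n ∧ (l.map D.r).prod = w }

/-- `N̄ w = {t ∈ T : ℓ(w t) < ℓ(w)}`. -/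
noncomputable def Nbar (w : W) : Set W :=
  { t | t ∈ D.T ∧ D.len (w * t) < D.len w }

/-- `N₁ w = {ẑ : z ∈ Φ₁⁺, w z ∈ Φ₁⁻}`. -/
def N₁ (w : W) : Set (Set V₁) :=
  { C | ∃ z, z ∈ D.PhiPos₁ ∧ D.ρ₁ w z ∈ D.PhiNeg₁ ∧ C = rayClass z }

/-- `N₂ w = {ẑ : z ∈ Φ₂⁺, w z ∈ Φ₂⁻}`. -/
def N₂ (w : W) : Set (Set V₂) :=
  { C | ∃ z, z ∈ D.PhiPos₂ ∧ D.ρ₂ w z ∈ D.PhiNeg₂ ∧ C = rayClass z }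

/-- A subgroup `W'` of `W` is a reflection subgroup when `W' = ⟨W' ∩ T⟩`. -/
def IsReflectionSubgroup (W' : Subgroup W) : Prop :=
  W' = Subgroup.closure ((W' : Set W) ∩ D.T)

/-- `Φ₁(W') = {x ∈ Φ₁ : r_x ∈ W'}`. -/
def PhiSub₁ (W' : Subgroup W) : Set V₁ :=
  { x | x ∈ D.Phi₁ ∧ D.refl₁ x ∈ W' }

/-- `Φ₂(W') = {y ∈ Φ₂ : r_y ∈ W'}`. -/
def PhiSub₂ (W' : Subgroup W) : Set V₂ :=
  { y | y ∈ D.Phi₂ ∧ D.refl₂ y ∈ W' }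

/-- The canonical generators `S(W') = {t ∈ T : N̄(t) ∩ W' = {t}}`. -/
noncomputable def SW (W' : Subgroup W) : Set W :=
  { t | t ∈ D.T ∧ D.Nbar t ∩ (W' : Set W) = {t} }

/-- `Δ₁(W') = {x ∈ Φ₁⁺ : r_x ∈ S(W')}`. -/
noncomputable def Delta₁ (W' : Subgroup W) : Set V₁ :=
  { x | x ∈ D.PhiPos₁ ∧ D.refl₁ x ∈ D.SW W' }

/-- `Δ₂(W') = {y ∈ Φ₂⁺ : r_y ∈ S(W')}`. -/
noncomputable def Delta₂ (W' : Subgroup W) : Set V₂ :=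
  { y | y ∈ D.PhiPos₂ ∧ D.refl₂ y ∈ D.SW W' }

/-- The length function `ℓ_{W'}` of a reflection subgroup `W'` with respect to its
canonical generators `S(W')`. -/
noncomputable def lenIn (W' : Subgroup W) (w : W) : ℕ :=
  sInf { n | ∃ l : List W, l.length = n ∧ (∀ t ∈ l, t ∈ D.SW W') ∧ l.prod = w }

section PLCLemmas
variable {V : Type*} [AddCommGroup V] [Module ℝ V]


lemma plc_smul_mem {A : Set V} {v : V}
    (hv : v ∈ PLC A) {c : ℝ} (hc : 0 < c) : c • v ∈ PLC A := by
  classical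
  obtain ⟨f, hf0, hfs, hfne, hfsum⟩ := hv
  refine ⟨c • f, fun a => ?_, ?_, ?_, ?_⟩
  · simpa using mul_nonneg hc.le (hf0 a)
  · rwa [Finsupp.support_smul_eq hc.ne']
  · simp only [ne_eq, smul_eq_zero, hfne, or_false]; exact hc.ne'
  · rw [hfsum, Finsupp.smul_sum, Finsupp.sum_smul_index (fun a => zero_smul ℝ a)]
    exact Finsupp.sum_congr (fun a _ => (mul_smul c (f a) a).symm)

lemma plc_mem_of_mem {A : Set V} {a : V} (ha : a ∈ A) : a ∈ PLC A := by
  classical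
  refine ⟨Finsupp.single a 1, fun b => ?_, ?_, ?_, ?_⟩
  · rcases eq_or_ne a b with rfl | h
    · simp
    · simp [Finsupp.single_apply, h]
  · intro b hb
    simp only [Finset.mem_coe, Finsupp.mem_support_iff, Finsupp.single_apply] at hb
    rcases eq_or_ne a b with rfl | h
    · exact ha
    · simp [h] at hb
  · simp
  · rw [Finsupp.sum_single_index] <;> simp

lemma plc_add_mem {A : Set V} {v w : V}
    (hv : v ∈ PLC A) (hw : w ∈ PLC A) : v + w ∈ PLC A := by
  classical
  obtain ⟨f, hf0, hfs, hfne, hfsum⟩ := hv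
  obtain ⟨g, hg0, hgs, hgne, hgsum⟩ := hw
  refine ⟨f + g, fun a => by simpa using add_nonneg (hf0 a) (hg0 a), ?_, ?_, ?_⟩
  · intro x hx
    have hx' : x ∈ f.support ∪ g.support := Finsupp.support_add (Finset.mem_coe.mp hx)
    rcases Finset.mem_union.mp hx' with h | h
    · exact hfs h
    · exact hgs h
  · intro h
    apply hfne
    ext a
    have h1 := hf0 a
    have h2 := hg0 a
    have h3 : f a + g a = 0 := by
      have := congrArg (fun k => k a) h; simpa using this
    have : f a = 0 := by linarith
    simpa using this
  · rw [hfsum, hgsum]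
    exact (Finsupp.sum_add_index' (fun a => zero_smul ℝ a)
      (fun a b₁ b₂ => add_smul b₁ b₂ a)).symm

end PLCLemmas


section Aux
variable {S V₁ V₂ W : Type*} [AddCommGroup V₁] [Module ℝ V₁]
  [AddCommGroup V₂] [Module ℝ V₂] [Group W] (D : CoxeterDatum S V₁ V₂ W)



/-- Key support lemma: a nonnegative combination of the `α`'s equal to a positive
multiple of `α s` is supported on `α s`. -/
lemma support_lemma {s : S} {c : ℝ} (hc : 0 < c) (d : V₁ →₀ ℝ)
    (hd0 : ∀ a, 0 ≤ d a) (hds : ↑d.support ⊆ Set.range D.α)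
    (hsum : d.sum (fun a t => t • a) = c • D.α s) :
    ∀ a, a ≠ D.α s → d a = 0 := by
  classical
  intro a ha
  by_contra hda
  set f : V₁ →₀ ℝ := d.erase (D.α s) with hf
  have hfne : f ≠ 0 := by
    intro h
    apply hda
    have := congrArg (fun k => k a) h
    simpa [hf, Finsupp.erase_apply, ha] using this
  have hf0 : ∀ b, 0 ≤ f b := by
    intro b
    rcases eq_or_ne b (D.α s) with rfl | h
    · simp [hf]
    · simpa [hf, Finsupp.erase_apply, h] using hd0 b
  have hfs : ↑f.support ⊆ Set.range D.α \ {D.α s} := by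
    intro x hx
    have hx1 : x ∈ d.support ∧ x ≠ D.α s := by
      have hx' : x ∈ (d.erase (D.α s)).support := Finset.mem_coe.mp hx
      rw [Finsupp.support_erase, Finset.mem_erase] at hx'
      exact ⟨hx'.2, hx'.1⟩
    exact ⟨hds hx1.1, hx1.2⟩
  set k : ℝ := d (D.α s) with hk
  have hd_eq : d = f + Finsupp.single (D.α s) k := by
    ext b
    rcases eq_or_ne b (D.α s) with rfl | h
    · simp [hf, Finsupp.erase_apply, hk]
    · simp [hf, Finsupp.erase_apply, h, Finsupp.single_apply, Ne.symm h]
  have hfsum : f.sum (fun a t => t • a) = (c - k) • D.α s := by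
    have hd' : d.sum (fun a t => t • a)
        = f.sum (fun a t => t • a) + k • D.α s := by
      conv_lhs => rw [hd_eq]
      rw [Finsupp.sum_add_index' (fun a => zero_smul ℝ a)
        (fun a b₁ b₂ => add_smul b₁ b₂ a)]
      congr 1
      exact Finsupp.sum_single_index (zero_smul ℝ (D.α s))
    rw [hd'] at hsum
    have : f.sum (fun a t => t • a) = c • D.α s - k • D.α s := by
      rw [← hsum]; abel
    rw [this, sub_smul]
  rcases lt_trichotomy k c with h | h | h
  · apply D.D2c s
    have hpos : (0:ℝ) < c - k := by linarith
    have hmem : (c - k)⁻¹ • (f.sum fun a t => t • a) ∈ PLC (Set.range D.α \ {D.α s}) :=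
      plc_smul_mem ⟨f, hf0, hfs, hfne, rfl⟩ (by positivity)
    have heq : (c - k)⁻¹ • (f.sum fun a t => t • a) = D.α s := by
      rw [hfsum, smul_smul, inv_mul_cancel₀ hpos.ne', one_smul]
    rwa [heq] at hmem
  · apply D.D2a
    refine ⟨f, hf0, subset_trans hfs (fun x hx => hx.1), hfne, ?_⟩
    rw [hfsum, h, sub_self, zero_smul]
  · apply D.D2a
    set g : V₁ →₀ ℝ := f + Finsupp.single (D.α s) (k - c) with hg
    have hgks : (0:ℝ) < k - c := by linarith
    refine ⟨g, ?_, ?_, ?_, ?_⟩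
    · intro b
      rcases eq_or_ne b (D.α s) with rfl | hb
      · have hfz : f (D.α s) = 0 := by simp [hf]
        simp [hg, hfz, Finsupp.single_apply, hgks.le]
      · simp [hg, Finsupp.single_apply, Ne.symm hb, hf0 b]
    · intro x hx
      have hx' : x ∈ f.support ∪ (Finsupp.single (D.α s) (k-c)).support :=
        Finsupp.support_add (Finset.mem_coe.mp hx)
      rcases Finset.mem_union.mp hx' with h' | h'
      · exact (hfs h').1
      · have : x = D.α s := by
          have := Finsupp.support_single_subset h'
          simpa using this
        exact this ▸ ⟨s, rfl⟩
    · intro h'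
      have hb := congrArg (fun kk => kk (D.α s)) h'
      have hfz : f (D.α s) = 0 := by simp [hf]
      simp only [hg, Finsupp.add_apply, hfz, Finsupp.single_apply, if_pos rfl,
        Finsupp.coe_zero, Pi.zero_apply, zero_add] at hb
      exact hgks.ne' (by simpa using hb)
    · rw [hg, Finsupp.sum_add_index' (fun a => zero_smul ℝ a)
        (fun a b₁ b₂ => add_smul b₁ b₂ a), hfsum,
        Finsupp.sum_single_index (zero_smul ℝ (D.α s)), sub_smul, sub_smul]
      abel

end Aux


section Aux2
variable {S V₁ V₂ W : Type*} [AddCommGroup V₁] [Module ℝ V₁]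
  [AddCommGroup V₂] [Module ℝ V₂] [Group W] (D : CoxeterDatum S V₁ V₂ W)



lemma rho_mul (w v : W) (x : V₁) : D.ρ₁ (w * v) x = D.ρ₁ w (D.ρ₁ v x) := by
  rw [map_mul]; rfl

lemma rho_one (x : V₁) : D.ρ₁ 1 x = x := by rw [map_one]; rfl

lemma rho₂_mul (w v : W) (y : V₂) : D.ρ₂ (w * v) y = D.ρ₂ w (D.ρ₂ v y) := by
  rw [map_mul]; rfl

lemma rho₂_one (y : V₂) : D.ρ₂ 1 y = y := by rw [map_one]; rfl

lemma rho_inv (w : W) (x : V₁) : D.ρ₁ w⁻¹ (D.ρ₁ w x) = x := by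
  rw [← D.rho_mul, inv_mul_cancel, D.rho_one]

lemma rho_inv' (w : W) (x : V₁) : D.ρ₁ w (D.ρ₁ w⁻¹ x) = x := by
  rw [← D.rho_mul, mul_inv_cancel, D.rho_one]

lemma alpha_mem_Phi₁ (s : S) : D.α s ∈ D.Phi₁ := ⟨1, s, (D.rho_one _).symm⟩

lemma Phi₁_stable {z : V₁} (hz : z ∈ D.Phi₁) (w : W) : D.ρ₁ w z ∈ D.Phi₁ := by
  obtain ⟨v, s, rfl⟩ := hz
  exact ⟨w * v, s, (D.rho_mul w v _).symm⟩

lemma pos_or_neg {z : V₁} (hz : z ∈ D.Phi₁) : z ∈ D.PhiPos₁ ∨ z ∈ D.PhiNeg₁ := by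
  have := D.decomp₁
  have hz' : z ∈ (({ v | ∃ w s, v = D.ρ₁ w (D.α s) } ∩ PLC (Set.range D.α)) ∪
        (-({ v | ∃ w s, v = D.ρ₁ w (D.α s) } ∩ PLC (Set.range D.α)))) := this ▸ hz
  exact hz'

lemma not_pos_neg {z : V₁} (h1 : z ∈ D.PhiPos₁) (h2 : z ∈ D.PhiNeg₁) : False := by
  have := D.disj₁
  exact Set.disjoint_left.mp this h1 h2

lemma neg_mem_iff {z : V₁} : z ∈ D.PhiNeg₁ ↔ -z ∈ D.PhiPos₁ := Set.mem_neg

lemma pos_mem_phi {z : V₁} (hz : z ∈ D.PhiPos₁) : z ∈ D.Phi₁ := hz.1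

lemma pos_mem_plc {z : V₁} (hz : z ∈ D.PhiPos₁) : z ∈ PLC (Set.range D.α) := hz.2

lemma rho_simple_alpha (s : S) : D.ρ₁ (D.r s) (D.α s) = -(D.α s) := by
  rw [D.hr₁, D.D1]; module

lemma neg_mem_phi {z : V₁} (hz : z ∈ D.PhiNeg₁) : z ∈ D.Phi₁ := by
  have h := (D.neg_mem_iff.mp hz).1
  have : z = D.ρ₁ 1 z := (D.rho_one z).symm
  obtain ⟨w, s, hw⟩ := h
  have : z = - D.ρ₁ w (D.α s) := by rw [← hw]; exact (neg_neg z).symm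
  rw [this]
  have : - D.ρ₁ w (D.α s) = D.ρ₁ (w * D.r s) (D.α s) := by
    rw [D.rho_mul, D.rho_simple_alpha, map_neg]
  rw [this]
  exact ⟨_, _, rfl⟩

lemma pos_ne_zero {z : V₁} (hz : z ∈ D.PhiPos₁) : z ≠ 0 := by
  intro h
  exact D.D2a (h ▸ hz.2)

lemma alpha_pos (s : S) : D.α s ∈ D.PhiPos₁ :=
  ⟨D.alpha_mem_Phi₁ s, plc_mem_of_mem (Set.mem_range_self s)⟩

/-- L3 : a positive root sent negative by a simple reflection is a positive
multiple of the corresponding simple root. -/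
lemma simple_flip {s : S} {z : V₁} (hz : z ∈ D.PhiPos₁)
    (h : D.ρ₁ (D.r s) z ∈ D.PhiNeg₁) : ∃ c : ℝ, 0 < c ∧ z = c • D.α s := by
  classical
  have hneg : -(D.ρ₁ (D.r s) z) ∈ D.PhiPos₁ := D.neg_mem_iff.mp h
  set κ : ℝ := 2 * D.pair z (D.β s) with hκ
  have hsum : z + -(D.ρ₁ (D.r s) z) = κ • D.α s := by
    rw [D.hr₁]; module
  rcases le_or_gt κ 0 with hk | hk
  · exfalso
    apply D.D2a
    rcases eq_or_lt_of_le hk with hk0 | hk0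
    · have : z + -(D.ρ₁ (D.r s) z) = 0 := by rw [hsum, hk0, zero_smul]
      rw [← this]
      exact plc_add_mem hz.2 hneg.2
    · have hmem : (z + -(D.ρ₁ (D.r s) z)) + (-κ) • D.α s ∈ PLC (Set.range D.α) := by
        refine plc_add_mem (plc_add_mem hz.2 hneg.2) ?_
        exact plc_smul_mem (plc_mem_of_mem (Set.mem_range_self s)) (by linarith)
      have : (z + -(D.ρ₁ (D.r s) z)) + (-κ) • D.α s = 0 := by
        rw [hsum]; module
      rwa [this] at hmem
  · obtain ⟨f, hf0, hfs, hfne, hfsum⟩ := hz.2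
    obtain ⟨g, hg0, hgs, hgne, hgsum⟩ := hneg.2
    have hd0 : ∀ a, 0 ≤ (f + g) a := fun a => by
      simpa using add_nonneg (hf0 a) (hg0 a)
    have hds : ↑(f + g).support ⊆ Set.range D.α := by
      intro x hx
      rcases Finset.mem_union.mp (Finsupp.support_add (Finset.mem_coe.mp hx)) with h' | h'
      · exact hfs h'
      · exact hgs h'
    have hdsum : (f + g).sum (fun a t => t • a) = κ • D.α s := by
      rw [Finsupp.sum_add_index' (fun a => zero_smul ℝ a)
        (fun a b₁ b₂ => add_smul b₁ b₂ a), ← hfsum, ← hgsum, hsum]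
    have hsupp := D.support_lemma hk (f + g) hd0 hds hdsum
    have hfss : f.support ⊆ {D.α s} := by
      intro x hx
      rw [Finset.mem_singleton]
      by_contra hxs
      have h1 : (f + g) x = 0 := hsupp x hxs
      have h2 : f x = 0 := by
        have := hf0 x; have := hg0 x
        have : f x + g x = 0 := by simpa using h1
        linarith
      exact (Finsupp.mem_support_iff.mp hx) h2
    have hf_eq : f = Finsupp.single (D.α s) (f (D.α s)) :=
      Finsupp.support_subset_singleton.mp (by exact_mod_cast hfss)
    have hz_eq : z = f (D.α s) • D.α s := by
      rw [hfsum, hf_eq, Finsupp.sum_single_index (zero_smul ℝ (D.α s))]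
      simp [Finsupp.single_eq_same]
    refine ⟨f (D.α s), ?_, hz_eq⟩
    rcases eq_or_lt_of_le (hf0 (D.α s)) with h0 | h0
    · exfalso
      apply hfne
      rw [hf_eq, ← h0, Finsupp.single_zero]
    · exact h0

lemma simple_flip_conv {s : S} {c : ℝ} (hc : 0 < c) (hmem : c • D.α s ∈ D.Phi₁) :
    D.ρ₁ (D.r s) (c • D.α s) ∈ D.PhiNeg₁ := by
  have h1 : D.ρ₁ (D.r s) (c • D.α s) = -(c • D.α s) := by
    rw [map_smul, D.rho_simple_alpha]; module
  rw [h1, D.neg_mem_iff, neg_neg]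
  exact ⟨hmem, plc_smul_mem (plc_mem_of_mem (Set.mem_range_self s)) hc⟩

lemma simple_keeps_pos {s : S} {z : V₁} (hz : z ∈ D.PhiPos₁)
    (h : ∀ c : ℝ, 0 < c → z ≠ c • D.α s) : D.ρ₁ (D.r s) z ∈ D.PhiPos₁ := by
  rcases D.pos_or_neg (D.Phi₁_stable hz.1 (D.r s)) with h' | h'
  · exact h'
  · obtain ⟨c, hc, hcz⟩ := D.simple_flip hz h'
    exact absurd hcz (h c hc)

/-- Lemma C : if `u α_s = c α_t` with `c > 0` then `u r_s u⁻¹ = r_t` (and the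
`V₂`-side scales inversely). -/
lemma conj_simple {u : W} {s t : S} {c : ℝ} (hc : 0 < c)
    (h : D.ρ₁ u (D.α s) = c • D.α t) :
    u * D.r s * u⁻¹ = D.r t ∧ D.ρ₂ u (D.β s) = c⁻¹ • D.β t := by
  have hc0 : c ≠ 0 := hc.ne'
  set Y : V₂ := D.ρ₂ u (D.β s) with hY
  have hφ : D.phi (D.ρ₁ u (D.α s)) = Y := by
    rw [D.phi_equiv u _ (D.alpha_mem_Phi₁ s), D.phi_simple]
  have hstep : D.ρ₁ (D.r t) (D.ρ₁ u (D.α s)) = D.ρ₁ (u * D.r s) (D.α s) := by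
    rw [h, map_smul, D.rho_simple_alpha, D.rho_mul, D.rho_simple_alpha, map_neg, h]
    module
  have hLHS : D.phi (D.ρ₁ (D.r t) (D.ρ₁ u (D.α s))) = D.ρ₂ (D.r t) Y := by
    rw [D.phi_equiv (D.r t) _ (D.Phi₁_stable (D.alpha_mem_Phi₁ s) u), hφ]
  have hRHS : D.phi (D.ρ₁ (u * D.r s) (D.α s)) = - Y := by
    rw [D.phi_equiv (u * D.r s) _ (D.alpha_mem_Phi₁ s), D.phi_simple, D.rho₂_mul,
      D.hr₂, D.D1, hY, map_sub, map_smul]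
    module
  have hneg : D.ρ₂ (D.r t) Y = - Y := by rw [← hLHS, hstep, hRHS]
  rw [D.hr₂] at hneg
  have h' : Y + Y = (2 * D.pair (D.α t) Y) • D.β t := by
    calc Y + Y = (Y - (2 * D.pair (D.α t) Y) • D.β t)
          + ((2 * D.pair (D.α t) Y) • D.β t + Y) := by module
    _ = -Y + ((2 * D.pair (D.α t) Y) • D.β t + Y) := by rw [hneg]
    _ = (2 * D.pair (D.α t) Y) • D.β t := by module
  have hYY : Y = (D.pair (D.α t) Y) • D.β t := by
    have h3 : (2:ℝ) • (Y - (D.pair (D.α t) Y) • D.β t) = 0 := by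
      rw [smul_sub, two_smul, h', smul_smul]
      module
    rcases smul_eq_zero.mp h3 with h4 | h4
    · norm_num at h4
    · exact (sub_eq_zero.mp h4)
  have hpairY : D.pair (D.α t) Y = c⁻¹ := by
    have h1 : c * D.pair (D.α t) Y = 1 := by
      have h6 : D.pair (D.ρ₁ u (D.α s)) (D.ρ₂ u (D.β s)) = 1 := by
        rw [D.pair_inv, D.D1]
      rw [h] at h6
      simpa [map_smul] using h6
    exact eq_inv_of_mul_eq_one_left (by linear_combination h1)
  have hY2 : Y = c⁻¹ • D.β t := by rw [hYY, hpairY]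
  refine ⟨?_, hY2⟩
  apply D.ρ₁_inj
  apply LinearMap.ext
  intro x
  have hx1 : D.ρ₁ (u * D.r s * u⁻¹) x = x - (2 * D.pair x Y) • (c • D.α t) := by
    rw [D.rho_mul, D.rho_mul, D.hr₁, map_sub, map_smul, D.rho_inv', ← h]
    congr 2
    conv_rhs => rw [hY, ← D.pair_inv u⁻¹, ← D.rho₂_mul, inv_mul_cancel, D.rho₂_one]
  show D.ρ₁ (u * D.r s * u⁻¹) x = D.ρ₁ (D.r t) x
  have hp : D.pair x Y = c⁻¹ * D.pair x (D.β t) := by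
    rw [hY2, map_smul, smul_eq_mul]
  rw [hx1, D.hr₁, hp, smul_smul]
  have h7 : 2 * (c⁻¹ * D.pair x (D.β t)) * c = 2 * D.pair x (D.β t) := by
    field_simp
  rw [h7]

end Aux2

section Aux3
variable {S V₁ V₂ W : Type*} [AddCommGroup V₁] [Module ℝ V₁]
  [AddCommGroup V₂] [Module ℝ V₂] [Group W] (D : CoxeterDatum S V₁ V₂ W)

lemma r_inv (s : S) : (D.r s)⁻¹ = D.r s := inv_eq_of_mul_eq_one_right (D.r_sq s)

lemma refl_eq_of_eq {z : V₁} {w : W} {s : S} (h : z = D.ρ₁ w (D.α s)) :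
    D.refl₁ z = w * D.r s * w⁻¹ := by rw [h, D.refl₁_eq]

lemma refl_alpha (s : S) : D.refl₁ (D.α s) = D.r s := by
  have h := D.refl₁_eq 1 s
  rw [D.rho_one] at h
  simpa using h

lemma refl_conj {z : V₁} (hz : z ∈ D.Phi₁) (w : W) :
    D.refl₁ (D.ρ₁ w z) = w * D.refl₁ z * w⁻¹ := by
  obtain ⟨v, s, rfl⟩ := hz
  rw [← D.rho_mul, D.refl₁_eq, D.refl₁_eq]
  group

lemma neg_root_eq {w : W} {s : S} :
    -(D.ρ₁ w (D.α s)) = D.ρ₁ (w * D.r s) (D.α s) := by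
  rw [D.rho_mul, D.rho_simple_alpha, map_neg]

lemma refl_neg {z : V₁} (hz : z ∈ D.Phi₁) : D.refl₁ (-z) = D.refl₁ z := by
  obtain ⟨v, s, rfl⟩ := hz
  rw [D.neg_root_eq, D.refl₁_eq, D.refl₁_eq]
  group

lemma refl_mem_T {z : V₁} (hz : z ∈ D.Phi₁) : D.refl₁ z ∈ D.T := by
  obtain ⟨v, s, rfl⟩ := hz
  rw [D.refl₁_eq]
  exact ⟨v, s, rfl⟩

lemma T_sq {t : W} (ht : t ∈ D.T) : t * t = 1 := by
  obtain ⟨w, s, rfl⟩ := ht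
  have h : w * D.r s * w⁻¹ * (w * D.r s * w⁻¹) = w * (D.r s * D.r s) * w⁻¹ := by group
  rw [h, D.r_sq, mul_one, mul_inv_cancel]

lemma T_inv {t : W} (ht : t ∈ D.T) : t⁻¹ = t := inv_eq_of_mul_eq_one_right (D.T_sq ht)

lemma T_ne_one {t : W} (ht : t ∈ D.T) : t ≠ 1 := by
  obtain ⟨w, s, rfl⟩ := ht
  intro h
  apply D.r_ne_one s
  have : D.r s = w⁻¹ * (w * D.r s * w⁻¹) * w := by group
  rw [this, h, mul_one, inv_mul_cancel]

lemma T_conj {t : W} (ht : t ∈ D.T) (w : W) : w * t * w⁻¹ ∈ D.T := by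
  obtain ⟨v, s, rfl⟩ := ht
  exact ⟨w * v, s, by group⟩

lemma pos_coeff {z : V₁} (hz : z ∈ D.PhiPos₁) {k : ℝ} {s : S} (h : z = k • D.α s) :
    0 < k := by
  rcases lt_trichotomy 0 k with hk | hk | hk
  · exact hk
  · exfalso; exact D.pos_ne_zero hz (by rw [h, ← hk, zero_smul])
  · exfalso
    apply D.D2a
    have hmem : z + (-k) • D.α s ∈ PLC (Set.range D.α) :=
      plc_add_mem hz.2 (plc_smul_mem (plc_mem_of_mem (Set.mem_range_self s)) (by linarith))
    have : z + (-k) • D.α s = 0 := by rw [h]; module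
    rwa [this] at hmem

lemma refl_smul {z : V₁} (hz : z ∈ D.Phi₁) {c : ℝ} (hc : 0 < c)
    (hcz : c • z ∈ D.Phi₁) : D.refl₁ (c • z) = D.refl₁ z := by
  obtain ⟨w, s, hw⟩ := hz
  obtain ⟨v, t, hv⟩ := hcz
  have h1 : D.ρ₁ (w⁻¹ * v) (D.α t) = c • D.α s := by
    rw [D.rho_mul, ← hv, hw, map_smul, D.rho_inv]
  obtain ⟨hconj, -⟩ := D.conj_simple hc h1
  rw [D.refl_eq_of_eq hv, D.refl_eq_of_eq hw]
  have : v * D.r t * v⁻¹ = w * (w⁻¹ * v * D.r t * (w⁻¹ * v)⁻¹) * w⁻¹ := by group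
  rw [this, hconj]

lemma pair_phi {z : V₁} (hz : z ∈ D.Phi₁) : D.pair z (D.phi z) = 1 := by
  obtain ⟨w, s, rfl⟩ := hz
  rw [D.phi_equiv w _ (D.alpha_mem_Phi₁ s), D.phi_simple, D.pair_inv, D.D1]

lemma refl_act_self {z : V₁} (hz : z ∈ D.Phi₁) : D.ρ₁ (D.refl₁ z) z = -z := by
  rw [D.refl₁_act z hz z, D.pair_phi hz]
  module

lemma T_root {t : W} (ht : t ∈ D.T) : ∃ z ∈ D.PhiPos₁, D.refl₁ z = t := by
  obtain ⟨w, s, rfl⟩ := ht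
  have hmem : D.ρ₁ w (D.α s) ∈ D.Phi₁ := ⟨w, s, rfl⟩
  rcases D.pos_or_neg hmem with h | h
  · exact ⟨_, h, D.refl₁_eq w s⟩
  · refine ⟨-(D.ρ₁ w (D.α s)), D.neg_mem_iff.mp h, ?_⟩
    rw [D.refl_neg hmem, D.refl₁_eq]

/-! ### length -/

lemma word_inv (l : List S) :
    ((l.map D.r).prod)⁻¹ = ((l.reverse).map D.r).prod := by
  induction l with
  | nil => simp
  | cons a l ih =>
      rw [List.map_cons, List.prod_cons, mul_inv_rev, ih, List.reverse_cons,
        List.map_append, List.prod_append]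
      simp [D.r_inv]

lemma word_exists (w : W) : ∃ l : List S, (l.map D.r).prod = w := by
  have hw : w ∈ Subgroup.closure (Set.range D.r) := by rw [D.r_gen]; trivial
  induction hw using Subgroup.closure_induction with
  | mem x hx =>
      obtain ⟨s, rfl⟩ := hx
      exact ⟨[s], by simp⟩
  | one => exact ⟨[], by simp⟩
  | mul x y hx hy ihx ihy =>
      obtain ⟨l₁, h₁⟩ := ihx
      obtain ⟨l₂, h₂⟩ := ihy
      exact ⟨l₁ ++ l₂, by rw [List.map_append, List.prod_append, h₁, h₂]⟩
  | inv x hx ihx =>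
      obtain ⟨l, h⟩ := ihx
      exact ⟨l.reverse, by rw [← D.word_inv, h]⟩

lemma len_set_nonempty (w : W) :
    {n | ∃ l : List S, l.length = n ∧ (l.map D.r).prod = w}.Nonempty := by
  obtain ⟨l, h⟩ := D.word_exists w
  exact ⟨l.length, l, rfl, h⟩

lemma len_le {w : W} {l : List S} (h : (l.map D.r).prod = w) : D.len w ≤ l.length :=
  Nat.sInf_le ⟨l, rfl, h⟩

lemma len_spec (w : W) : ∃ l : List S, l.length = D.len w ∧ (l.map D.r).prod = w :=
  Nat.sInf_mem (D.len_set_nonempty w)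

lemma len_one : D.len 1 = 0 :=
  Nat.le_zero.mp (D.len_le (l := []) (by simp))

lemma len_eq_zero_iff {w : W} : D.len w = 0 ↔ w = 1 := by
  constructor
  · intro h
    obtain ⟨l, hl, hp⟩ := D.len_spec w
    rw [h, List.length_eq_zero_iff] at hl
    rw [← hp, hl]
    simp
  · rintro rfl; exact D.len_one

lemma len_pos {w : W} (hw : w ≠ 1) : 0 < D.len w :=
  Nat.pos_of_ne_zero (fun h => hw (D.len_eq_zero_iff.mp h))

lemma len_inv_le (w : W) : D.len w⁻¹ ≤ D.len w := by
  obtain ⟨l, hl, hp⟩ := D.len_spec w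
  have : ((l.reverse).map D.r).prod = w⁻¹ := by rw [← D.word_inv, hp]
  calc D.len w⁻¹ ≤ l.reverse.length := D.len_le this
  _ = D.len w := by rw [List.length_reverse, hl]

lemma len_inv (w : W) : D.len w⁻¹ = D.len w :=
  le_antisymm (D.len_inv_le w) (by simpa using D.len_inv_le w⁻¹)

lemma len_mul_le (u v : W) : D.len (u * v) ≤ D.len u + D.len v := by
  obtain ⟨l₁, h₁, hp₁⟩ := D.len_spec u
  obtain ⟨l₂, h₂, hp₂⟩ := D.len_spec v
  have : ((l₁ ++ l₂).map D.r).prod = u * v := by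
    rw [List.map_append, List.prod_append, hp₁, hp₂]
  calc D.len (u * v) ≤ (l₁ ++ l₂).length := D.len_le this
  _ = D.len u + D.len v := by rw [List.length_append, h₁, h₂]

lemma len_mul_r_le (w : W) (s : S) : D.len (w * D.r s) ≤ D.len w + 1 := by
  have h : D.len (D.r s) ≤ 1 := D.len_le (l := [s]) (by simp)
  calc D.len (w * D.r s) ≤ D.len w + D.len (D.r s) := D.len_mul_le w _
  _ ≤ D.len w + 1 := by omega

lemma exists_last {w : W} (hw : w ≠ 1) :
    ∃ (u : W) (s : S), w = u * D.r s ∧ D.len u < D.len w := by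
  obtain ⟨l, hl, hp⟩ := D.len_spec w
  have hlne : l ≠ [] := by
    intro h
    apply hw
    rw [← hp, h]; simp
  have hrev : l.reverse ≠ [] := by simpa using hlne
  obtain ⟨s, l₂, hrl⟩ := List.exists_cons_of_ne_nil hrev
  have hl2 : l = l₂.reverse ++ [s] := by
    rw [← List.reverse_reverse l, hrl]
    simp
  refine ⟨((l₂.reverse).map D.r).prod, s, ?_, ?_⟩
  · rw [← hp, hl2, List.map_append, List.prod_append]
    simp
  · have h1 : D.len (((l₂.reverse).map D.r).prod) ≤ l₂.reverse.length := D.len_le rfl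
    have h2 : l₂.reverse.length + 1 = D.len w := by
      rw [← hl, hl2, List.length_append]
      simp
    omega

lemma exists_first {w : W} (hw : w ≠ 1) :
    ∃ (s : S) (u : W), w = D.r s * u ∧ D.len u < D.len w := by
  obtain ⟨u, s, h1, h2⟩ := D.exists_last (w := w⁻¹) (by simpa using hw)
  refine ⟨s, u⁻¹, ?_, ?_⟩
  · rw [← inv_inv w, h1, mul_inv_rev, D.r_inv]
  · rw [D.len_inv, ← D.len_inv w]
    exact h2

end Aux3
section Aux4
variable {S V₁ V₂ W : Type*} [AddCommGroup V₁] [Module ℝ V₁]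
  [AddCommGroup V₂] [Module ℝ V₂] [Group W] (D : CoxeterDatum S V₁ V₂ W)

lemma lemma_B_forward : ∀ n : ℕ, ∀ (u : W) (s : S), D.len u ≤ n →
    D.ρ₁ u (D.α s) ∈ D.PhiNeg₁ → D.len (u * D.r s) < D.len u := by
  intro n
  induction n with
  | zero =>
      intro u s hlen hneg
      exfalso
      have hu : u = 1 := D.len_eq_zero_iff.mp (Nat.le_zero.mp hlen)
      rw [hu, D.rho_one] at hneg
      exact D.not_pos_neg (D.alpha_pos s) hneg
  | succ n ih =>
      intro u s hlen hneg
      by_cases hu : u = 1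
      · exfalso
        rw [hu, D.rho_one] at hneg
        exact D.not_pos_neg (D.alpha_pos s) hneg
      · obtain ⟨s', u', hdecomp, hlt⟩ := D.exists_first hu
        have hmem : D.ρ₁ u' (D.α s) ∈ D.Phi₁ := D.Phi₁_stable (D.alpha_mem_Phi₁ s) u'
        have hcomp : D.ρ₁ (D.r s') (D.ρ₁ u' (D.α s)) = D.ρ₁ u (D.α s) := by
          rw [← D.rho_mul, ← hdecomp]
        rcases D.pos_or_neg hmem with hpos | hneg'
        · -- u' α_s positive, r_s' flips it: it is c • α_s'
          have hflip : D.ρ₁ (D.r s') (D.ρ₁ u' (D.α s)) ∈ D.PhiNeg₁ := by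
            rw [hcomp]; exact hneg
          obtain ⟨c, hc, hcz⟩ := D.simple_flip hpos hflip
          obtain ⟨hconj, -⟩ := D.conj_simple hc hcz
          have hkey : u * D.r s = u' := by
            rw [hdecomp, ← hconj]
            have h2 := D.r_sq s
            calc u' * D.r s * u'⁻¹ * u' * D.r s = u' * (D.r s * D.r s) := by group
            _ = u' := by rw [h2, mul_one]
          rw [hkey, hdecomp]
          calc D.len u' < D.len u' + 1 := Nat.lt_succ_self _
          _ ≤ D.len (D.r s' * u') := by
              by_contra hcon
              push_neg at hcon
              -- len (r s' * u') ≤ len u' : but then len u' ≤ len (r_s' * (r_s' u'))...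
              have : u' = D.r s' * (D.r s' * u') := by
                rw [← mul_assoc, D.r_sq, one_mul]
              have h3 : D.len u' ≤ 1 + D.len (D.r s' * u') := by
                calc D.len u' = D.len (D.r s' * (D.r s' * u')) := by rw [← this]
                _ ≤ D.len (D.r s') + D.len (D.r s' * u') := D.len_mul_le _ _
                _ ≤ 1 + D.len (D.r s' * u') := by
                    have : D.len (D.r s') ≤ 1 := D.len_le (l := [s']) (by simp)
                    omega
              -- combined with hlt : len u' < len u = len (r s' u')... 
              rw [← hdecomp] at hcon
              omega
        · have hih := ih u' s (by omega) hneg'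
          have h4 : D.len (u * D.r s) ≤ 1 + D.len (u' * D.r s) := by
            calc D.len (u * D.r s) = D.len (D.r s' * (u' * D.r s)) := by
                  rw [hdecomp, mul_assoc]
            _ ≤ D.len (D.r s') + D.len (u' * D.r s) := D.len_mul_le _ _
            _ ≤ 1 + D.len (u' * D.r s) := by
                have : D.len (D.r s') ≤ 1 := D.len_le (l := [s']) (by simp)
                omega
          omega

lemma lemma_B {u : W} {s : S} :
    D.ρ₁ u (D.α s) ∈ D.PhiNeg₁ ↔ D.len (u * D.r s) < D.len u := by
  constructor
  · exact fun h => D.lemma_B_forward (D.len u) u s le_rfl h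
  · intro h
    by_contra hcon
    have hpos : D.ρ₁ u (D.α s) ∈ D.PhiPos₁ := by
      rcases D.pos_or_neg (D.Phi₁_stable (D.alpha_mem_Phi₁ s) u) with h' | h'
      · exact h'
      · exact absurd h' hcon
    have hneg2 : D.ρ₁ (u * D.r s) (D.α s) ∈ D.PhiNeg₁ := by
      rw [D.rho_mul, D.rho_simple_alpha, map_neg, D.neg_mem_iff, neg_neg]
      exact hpos
    have := D.lemma_B_forward (D.len (u * D.r s)) (u * D.r s) s le_rfl hneg2
    have hid : u * D.r s * D.r s = u := by
      rw [mul_assoc, D.r_sq, mul_one]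
    rw [hid] at this
    omega

lemma lemma_B_left {v : W} {s : S} :
    D.ρ₁ v⁻¹ (D.α s) ∈ D.PhiNeg₁ ↔ D.len (D.r s * v) < D.len v := by
  rw [D.lemma_B]
  constructor
  · intro h
    have he : D.r s * v = (v⁻¹ * D.r s)⁻¹ := by
      rw [mul_inv_rev, D.r_inv, inv_inv]
    rw [he, D.len_inv, ← D.len_inv v]
    exact h
  · intro h
    have he : v⁻¹ * D.r s = (D.r s * v)⁻¹ := by
      rw [mul_inv_rev, D.r_inv]
    rw [he, D.len_inv, D.len_inv v]
    exact h

/-- B′ forward, by induction on length. -/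
lemma lemma_Bp_forward : ∀ n : ℕ, ∀ (w : W) (y : V₁), y ∈ D.PhiPos₁ → D.len w ≤ n →
    D.ρ₁ w y ∈ D.PhiNeg₁ → D.len (w * D.refl₁ y) < D.len w := by
  intro n
  induction n with
  | zero =>
      intro w y hy hlen hneg
      exfalso
      have hw : w = 1 := D.len_eq_zero_iff.mp (Nat.le_zero.mp hlen)
      rw [hw, D.rho_one] at hneg
      exact D.not_pos_neg hy hneg
  | succ n ih =>
      intro w y hy hlen hneg
      by_cases hw : w = 1
      · exfalso
        rw [hw, D.rho_one] at hneg
        exact D.not_pos_neg hy hneg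
      · obtain ⟨s', w', hdecomp, hlt⟩ := D.exists_first hw
        have hmem : D.ρ₁ w' y ∈ D.Phi₁ := D.Phi₁_stable hy.1 w'
        have hcomp : D.ρ₁ (D.r s') (D.ρ₁ w' y) = D.ρ₁ w y := by
          rw [← D.rho_mul, ← hdecomp]
        rcases D.pos_or_neg hmem with hpos | hneg' 
        · have hflip : D.ρ₁ (D.r s') (D.ρ₁ w' y) ∈ D.PhiNeg₁ := by
            rw [hcomp]; exact hneg
          obtain ⟨c, hc, hcz⟩ := D.simple_flip ⟨hmem, hpos.2⟩ hflip
          -- w' (refl y) w'⁻¹ = r s'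
          obtain ⟨v, t, hv⟩ := hy.1
          have h1 : D.ρ₁ (w' * v) (D.α t) = c • D.α s' := by
            rw [D.rho_mul, ← hv, hcz]
          obtain ⟨hconj, -⟩ := D.conj_simple hc h1
          have hrefl : w' * D.refl₁ y * w'⁻¹ = D.r s' := by
            rw [D.refl_eq_of_eq hv, ← hconj]
            group
          have hkey : w * D.refl₁ y = w' := by
            rw [hdecomp, ← hrefl]
            have hsq : D.refl₁ y * D.refl₁ y = 1 := D.T_sq (D.refl_mem_T hy.1)
            calc w' * D.refl₁ y * w'⁻¹ * w' * D.refl₁ y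
                = w' * (D.refl₁ y * D.refl₁ y) := by group
            _ = w' := by rw [hsq, mul_one]
          rw [hkey, hdecomp]
          calc D.len w' < D.len w' + 1 := Nat.lt_succ_self _
          _ ≤ D.len (D.r s' * w') := by
              by_contra hcon
              push_neg at hcon
              have h5 : w' = D.r s' * (D.r s' * w') := by
                rw [← mul_assoc, D.r_sq, one_mul]
              have h3 : D.len w' ≤ 1 + D.len (D.r s' * w') := by
                calc D.len w' = D.len (D.r s' * (D.r s' * w')) := by rw [← h5]
                _ ≤ D.len (D.r s') + D.len (D.r s' * w') := D.len_mul_le _ _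
                _ ≤ 1 + D.len (D.r s' * w') := by
                    have : D.len (D.r s') ≤ 1 := D.len_le (l := [s']) (by simp)
                    omega
              rw [← hdecomp] at hcon
              omega
        · have hih := ih w' y hy (by omega) hneg'
          have h4 : D.len (w * D.refl₁ y) ≤ 1 + D.len (w' * D.refl₁ y) := by
            calc D.len (w * D.refl₁ y) = D.len (D.r s' * (w' * D.refl₁ y)) := by
                  rw [hdecomp, mul_assoc]
            _ ≤ D.len (D.r s') + D.len (w' * D.refl₁ y) := D.len_mul_le _ _
            _ ≤ 1 + D.len (w' * D.refl₁ y) := by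
                have : D.len (D.r s') ≤ 1 := D.len_le (l := [s']) (by simp)
                omega
          omega

/-- B′ : for a positive root `y`, `w` sends `y` negative iff right multiplication by
`refl₁ y` shortens `w`. -/
lemma lemma_Bp {w : W} {y : V₁} (hy : y ∈ D.PhiPos₁) :
    D.ρ₁ w y ∈ D.PhiNeg₁ ↔ D.len (w * D.refl₁ y) < D.len w := by
  constructor
  · exact fun h => D.lemma_Bp_forward (D.len w) w y hy le_rfl h
  · intro h
    by_contra hcon
    have hpos : D.ρ₁ w y ∈ D.PhiPos₁ := by
      rcases D.pos_or_neg (D.Phi₁_stable hy.1 w) with h' | h'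
      · exact h'
      · exact absurd h' hcon
    have hneg2 : D.ρ₁ (w * D.refl₁ y) y ∈ D.PhiNeg₁ := by
      rw [D.rho_mul, D.refl_act_self hy.1, map_neg, D.neg_mem_iff, neg_neg]
      exact hpos
    have hstep := D.lemma_Bp_forward (D.len (w * D.refl₁ y)) (w * D.refl₁ y) y hy
      le_rfl hneg2
    have hid : w * D.refl₁ y * D.refl₁ y = w := by
      rw [mul_assoc, D.T_sq (D.refl_mem_T hy.1), mul_one]
    rw [hid] at hstep
    omega

lemma refl_fix_ray {y : V₁} (hy : y ∈ D.PhiPos₁) {s : S} {c : ℝ} (hc : 0 < c)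
    (h : D.ρ₁ (D.refl₁ y) (D.α s) = -(c • D.α s)) : D.refl₁ y = D.r s := by
  have hact := D.refl₁_act y hy.1 (D.α s)
  set A : ℝ := 2 * D.pair (D.α s) (D.phi y) with hA
  have h1 : A • y = (1 + c) • D.α s := by
    rw [h] at hact
    calc A • y = D.α s - (D.α s - A • y) := by module
    _ = D.α s - (-(c • D.α s)) := by rw [← hact]
    _ = (1 + c) • D.α s := by module
  have hAne : A ≠ 0 := by
    intro hA0
    rw [hA0, zero_smul] at h1
    have h2 : (1 + c : ℝ) ≠ 0 := by positivity
    rcases smul_eq_zero.mp h1.symm with h3 | h3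
    · exact h2 h3
    · exact D.pos_ne_zero (D.alpha_pos s) h3
  have hy_eq : y = (A⁻¹ * (1 + c)) • D.α s := by
    have : A⁻¹ • (A • y) = A⁻¹ • ((1 + c) • D.α s) := by rw [h1]
    rwa [smul_smul, smul_smul, inv_mul_cancel₀ hAne, one_smul] at this
  have hk : 0 < A⁻¹ * (1 + c) := D.pos_coeff hy hy_eq
  have := D.refl_smul (D.alpha_mem_Phi₁ s) hk (hy_eq ▸ hy.1)
  rw [← hy_eq] at this
  rw [this, D.refl_alpha]

/-- Lemma E : conjugating a reflection by a simple descent shortens it by ≥ 2. -/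
lemma lemma_E {t : W} (ht : t ∈ D.T) {s : S} (hts : t ≠ D.r s)
    (hflip : D.ρ₁ t (D.α s) ∈ D.PhiNeg₁) :
    D.len (D.r s * t * D.r s) + 2 ≤ D.len t := by
  have h1 : D.len (t * D.r s) < D.len t := D.lemma_B.mp hflip
  set z₀ : V₁ := -(D.ρ₁ t (D.α s)) with hz₀
  have hz₀pos : z₀ ∈ D.PhiPos₁ := D.neg_mem_iff.mp hflip
  have hz₀ray : ∀ c : ℝ, 0 < c → z₀ ≠ c • D.α s := by
    intro c hc hcz
    apply hts
    obtain ⟨y, hy, hrefl⟩ := D.T_root ht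
    rw [← hrefl]
    apply D.refl_fix_ray hy hc
    rw [hrefl]
    rw [← neg_neg (D.ρ₁ t (D.α s)), ← hz₀, hcz]
  have h2 : D.len (D.r s * (t * D.r s)) < D.len (t * D.r s) := by
    rw [← D.lemma_B_left]
    have hinv : (t * D.r s)⁻¹ = D.r s * t := by
      rw [mul_inv_rev, D.r_inv, D.T_inv ht]
    rw [hinv, D.rho_mul]
    have hkeep : D.ρ₁ (D.r s) z₀ ∈ D.PhiPos₁ := D.simple_keeps_pos hz₀pos hz₀ray
    have : D.ρ₁ (D.r s) (D.ρ₁ t (D.α s)) = -(D.ρ₁ (D.r s) z₀) := by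
      rw [hz₀, map_neg, neg_neg]
    rw [this, D.neg_mem_iff, neg_neg]
    exact hkeep
  have h3 : D.r s * t * D.r s = D.r s * (t * D.r s) := by rw [mul_assoc]
  rw [h3]
  omega

end Aux4
section Aux5
variable {S V₁ V₂ W : Type*} [AddCommGroup V₁] [Module ℝ V₁]
  [AddCommGroup V₂] [Module ℝ V₂] [Group W] (D : CoxeterDatum S V₁ V₂ W)

lemma sq_collapse {G : Type*} [Group G] {a : G} (ha : a * a = 1) :
    ∀ x : G, a * (a * x) = x := fun x => by rw [← mul_assoc, ha, one_mul]

lemma conj_refl_subgroup (W' : Subgroup W) (hW' : D.IsReflectionSubgroup W') (g : W) :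
    D.IsReflectionSubgroup (W'.map (MulAut.conj g).toMonoidHom) := by
  unfold IsReflectionSubgroup at *
  have himg : (MulAut.conj g).toMonoidHom '' ((W' : Set W) ∩ D.T)
      = ↑(W'.map (MulAut.conj g).toMonoidHom) ∩ D.T := by
    ext x
    constructor
    · rintro ⟨y, ⟨hyW, hyT⟩, rfl⟩
      refine ⟨⟨y, hyW, rfl⟩, ?_⟩
      simpa [MulAut.conj_apply] using D.T_conj hyT g
    · rintro ⟨⟨y, hyW, rfl⟩, hxT⟩
      refine ⟨y, ⟨hyW, ?_⟩, rfl⟩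
      have h2 := D.T_conj hxT g⁻¹
      have h3 : g⁻¹ * ((MulAut.conj g).toMonoidHom y) * g⁻¹⁻¹ = y := by
        simp [MulAut.conj_apply]
        group
      rwa [h3] at h2
  conv_lhs => rw [hW']
  rw [MonoidHom.map_closure, himg]

lemma SW_mem_W' {W' : Subgroup W} {t : W} (h : t ∈ D.SW W') : t ∈ W' := by
  obtain ⟨htT, hset⟩ := h
  have : t ∈ D.Nbar t ∩ (W' : Set W) := by
    rw [hset]; exact rfl
  exact this.2

lemma self_mem_Nbar {t : W} (ht : t ∈ D.T) : t ∈ D.Nbar t := by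
  refine ⟨ht, ?_⟩
  rw [D.T_sq ht, D.len_one]
  exact D.len_pos (D.T_ne_one ht)

/-- KEY LEMMA: if `t ∈ W' ∩ T` has a reflection `t' ∈ W'`, `t' ≠ t`, whose (positive)
root is sent negative by `t`, then some element of `W'` conjugates `t` strictly
shorter. -/
lemma key_lemma : ∀ n : ℕ, ∀ (W' : Subgroup W), D.IsReflectionSubgroup W' →
    ∀ (t t' : W) (y' : V₁), t ∈ W' → t ∈ D.T → t' ∈ W' → t' ≠ t →
    y' ∈ D.PhiPos₁ → D.refl₁ y' = t' → D.ρ₁ t y' ∈ D.PhiNeg₁ →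
    D.len t ≤ n →
    ∃ w ∈ W', D.len (w * t * w⁻¹) < D.len t := by
  intro n
  induction n with
  | zero =>
      intro W' hW' t t' y' htW htT ht'W hne hy' hrefl hflip hlen
      exfalso
      exact D.T_ne_one htT (D.len_eq_zero_iff.mp (Nat.le_zero.mp hlen))
  | succ n ih =>
      intro W' hW' t t' y' htW htT ht'W hne hy' hrefl hflip hlen
      have htne1 : t ≠ 1 := D.T_ne_one htT
      obtain ⟨u, s, hdec, hlt⟩ := D.exists_last htne1
      have hdesc : D.ρ₁ t (D.α s) ∈ D.PhiNeg₁ := by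
        rw [D.lemma_B]
        have h1 : t * D.r s = u := by
          rw [hdec, mul_assoc, D.r_sq, mul_one]
        rw [h1]
        exact hlt
      have hts : t ≠ D.r s := by
        intro h
        apply hne
        rw [← hrefl]
        obtain ⟨c, hc, hcy⟩ := D.simple_flip hy' (by rw [← h]; exact hflip)
        rw [hcy, D.refl_smul (D.alpha_mem_Phi₁ s) hc (hcy ▸ hy'.1), D.refl_alpha, h]
      have hE := D.lemma_E htT hts hdesc
      by_cases hcase1 : ∃ c : ℝ, 0 < c ∧ y' = c • D.α s
      · obtain ⟨c, hc, hcy⟩ := hcase1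
        have ht' : t' = D.r s := by
          rw [← hrefl, hcy, D.refl_smul (D.alpha_mem_Phi₁ s) hc (hcy ▸ hy'.1),
            D.refl_alpha]
        refine ⟨t', ht'W, ?_⟩
        rw [ht', D.r_inv]
        omega
      push_neg at hcase1
      by_cases hcase2 : ∃ c : ℝ, 0 < c ∧ -(D.ρ₁ t y') = c • D.α s
      · obtain ⟨c, hc, hcy⟩ := hcase2
        have hmem2 : D.ρ₁ t y' ∈ D.Phi₁ := D.Phi₁_stable hy'.1 t
        have hmemn : -(D.ρ₁ t y') ∈ D.Phi₁ := (D.neg_mem_iff.mp hflip).1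
        have hr1 : D.refl₁ (-(D.ρ₁ t y')) = D.r s := by
          rw [hcy, D.refl_smul (D.alpha_mem_Phi₁ s) hc (hcy ▸ hmemn), D.refl_alpha]
        have hr2 : D.refl₁ (-(D.ρ₁ t y')) = t * t' * t⁻¹ := by
          rw [D.refl_neg hmem2, D.refl_conj hy'.1 t, hrefl]
        have hrs_mem : D.r s ∈ W' := by
          rw [← hr1, hr2]
          exact mul_mem (mul_mem htW ht'W) (inv_mem htW)
        refine ⟨D.r s, hrs_mem, ?_⟩
        rw [D.r_inv]
        omega
      push_neg at hcase2
      set y₃ := D.ρ₁ (D.r s) y' with hy3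
      have hypos : y₃ ∈ D.PhiPos₁ :=
        D.simple_keeps_pos hy' (fun c hc h => hcase1 c hc h)
      set t₂ := D.r s * t * D.r s with ht₂
      have ht₂T : t₂ ∈ D.T := by
        have h7 := D.T_conj htT (D.r s)
        rwa [D.r_inv] at h7
      set W'' := W'.map (MulAut.conj (D.r s)).toMonoidHom with hW₂
      have hW''refl := D.conj_refl_subgroup W' hW' (D.r s)
      have ht₂W : t₂ ∈ W'' := ⟨t, htW, by simp [MulAut.conj_apply, D.r_inv, ht₂]⟩
      set t₂' := D.r s * t' * D.r s with ht₂'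
      have ht₂'W : t₂' ∈ W'' := ⟨t', ht'W, by simp [MulAut.conj_apply, D.r_inv, ht₂']⟩
      have hne2 : t₂' ≠ t₂ := by
        intro h
        apply hne
        rw [ht₂', ht₂] at h
        have h' : D.r s * (t' * D.r s) = D.r s * (t * D.r s) := by
          rw [← mul_assoc, ← mul_assoc]; exact h
        exact mul_right_cancel (mul_left_cancel h')
      have hrefl2 : D.refl₁ y₃ = t₂' := by
        rw [hy3, D.refl_conj hy'.1 (D.r s), hrefl, D.r_inv, ht₂']
      have hflip2 : D.ρ₁ t₂ y₃ ∈ D.PhiNeg₁ := by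
        have h6 : D.ρ₁ t₂ y₃ = D.ρ₁ (D.r s) (D.ρ₁ t y') := by
          rw [hy3, ← D.rho_mul, ← D.rho_mul, ht₂]
          congr 1
          rw [mul_assoc, mul_assoc, D.r_sq, mul_one]
        rw [h6]
        have hpos2 : -(D.ρ₁ t y') ∈ D.PhiPos₁ := D.neg_mem_iff.mp hflip
        have hkeep := D.simple_keeps_pos hpos2 (fun c hc h => hcase2 c hc h)
        rw [D.neg_mem_iff]
        rw [show -(D.ρ₁ (D.r s) (D.ρ₁ t y')) = D.ρ₁ (D.r s) (-(D.ρ₁ t y')) by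
          rw [map_neg]]
        exact hkeep
      have hlen2 : D.len t₂ ≤ n := by omega
      obtain ⟨w'', hw''W, hw''len⟩ := ih W'' hW''refl t₂ t₂' y₃ ht₂W ht₂T ht₂'W hne2
        hypos hrefl2 hflip2 hlen2
      obtain ⟨v, hvW, hveq⟩ := hw''W
      have hw2 : w'' = D.r s * v * D.r s := by
        rw [← hveq]
        simp [MulAut.conj_apply, D.r_inv]
      refine ⟨v, hvW, ?_⟩
      have hsq := D.r_sq s
      have hvinv : (D.r s * v * D.r s)⁻¹ = D.r s * v⁻¹ * D.r s := by
        rw [mul_inv_rev, mul_inv_rev, D.r_inv]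
        group
      have e1 : v * t * v⁻¹ = D.r s * (w'' * t₂ * w''⁻¹) * D.r s := by
        rw [hw2, hvinv, ht₂]
        simp only [mul_assoc, sq_collapse hsq, hsq, mul_one]
      have e2 : D.len (v * t * v⁻¹) ≤ D.len (w'' * t₂ * w''⁻¹) + 2 := by
        rw [e1]
        have hr1 : D.len (D.r s) ≤ 1 := D.len_le (l := [s]) (by simp)
        calc D.len (D.r s * (w'' * t₂ * w''⁻¹) * D.r s)
            ≤ D.len (D.r s * (w'' * t₂ * w''⁻¹)) + D.len (D.r s) := D.len_mul_le _ _
        _ ≤ D.len (D.r s) + D.len (w'' * t₂ * w''⁻¹) + D.len (D.r s) := by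
            have := D.len_mul_le (D.r s) (w'' * t₂ * w''⁻¹)
            omega
        _ ≤ D.len (w'' * t₂ * w''⁻¹) + 2 := by omega
      omega

/-- Main induction (side 1): every positive root with reflection in `W'` lies in
`W' · Δ₁(W')`. -/
lemma main₁ (W' : Subgroup W) (hW' : D.IsReflectionSubgroup W') :
    ∀ n : ℕ, ∀ z : V₁, z ∈ D.PhiPos₁ → D.refl₁ z ∈ W' → D.len (D.refl₁ z) ≤ n →
    ∃ w ∈ W', ∃ x ∈ D.Delta₁ W', z = D.ρ₁ w x := by
  intro n
  induction n with
  | zero =>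
      intro z hz htW hlen
      exfalso
      exact D.T_ne_one (D.refl_mem_T hz.1) (D.len_eq_zero_iff.mp (Nat.le_zero.mp hlen))
  | succ n ih =>
      intro z hz htW hlen
      set t := D.refl₁ z with htdef
      have htT : t ∈ D.T := D.refl_mem_T hz.1
      by_cases hSW : D.Nbar t ∩ (W' : Set W) = {t}
      · refine ⟨1, one_mem _, z, ⟨hz, htT, hSW⟩, ?_⟩
        rw [D.rho_one]
      · have htmem : t ∈ D.Nbar t ∩ (W' : Set W) := ⟨D.self_mem_Nbar htT, htW⟩
        have hex : ∃ t' ∈ D.Nbar t ∩ (W' : Set W), t' ≠ t := by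
          by_contra h
          push_neg at h
          apply hSW
          apply Set.eq_singleton_iff_unique_mem.mpr
          exact ⟨htmem, h⟩
        obtain ⟨t', ⟨⟨ht'T, ht'len⟩, ht'W⟩, hne⟩ := hex
        obtain ⟨y', hy', hrefly⟩ := D.T_root ht'T
        have hflip : D.ρ₁ t y' ∈ D.PhiNeg₁ := by
          rw [D.lemma_Bp hy', hrefly]
          exact ht'len
        obtain ⟨w₀, hw₀, hw₀len⟩ := D.key_lemma (D.len t) W' hW' t t' y' htW htT
          ht'W hne hy' hrefly hflip le_rfl
        have hz₂phi : D.ρ₁ w₀ z ∈ D.Phi₁ := D.Phi₁_stable hz.1 w₀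
        have hreflz₂ : D.refl₁ (D.ρ₁ w₀ z) = w₀ * t * w₀⁻¹ := D.refl_conj hz.1 w₀
        have hconjW : w₀ * t * w₀⁻¹ ∈ W' := mul_mem (mul_mem hw₀ htW) (inv_mem hw₀)
        rcases D.pos_or_neg hz₂phi with hpos | hneg
        · obtain ⟨w₂, hw₂, x, hxΔ, hzx⟩ := ih (D.ρ₁ w₀ z) hpos
            (by rw [hreflz₂]; exact hconjW) (by rw [hreflz₂]; omega)
          refine ⟨w₀⁻¹ * w₂, mul_mem (inv_mem hw₀) hw₂, x, hxΔ, ?_⟩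
          rw [D.rho_mul, ← hzx, D.rho_inv]
        · have hneg' : -(D.ρ₁ w₀ z) ∈ D.PhiPos₁ := D.neg_mem_iff.mp hneg
          have hrefln : D.refl₁ (-(D.ρ₁ w₀ z)) = w₀ * t * w₀⁻¹ := by
            rw [D.refl_neg hz₂phi, hreflz₂]
          obtain ⟨w₂, hw₂, x, hxΔ, hzx⟩ := ih (-(D.ρ₁ w₀ z)) hneg'
            (by rw [hrefln]; exact hconjW) (by rw [hrefln]; omega)
          have hxW : D.refl₁ x ∈ W' := D.SW_mem_W' hxΔ.2
          refine ⟨w₀⁻¹ * w₂ * D.refl₁ x,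
            mul_mem (mul_mem (inv_mem hw₀) hw₂) hxW, x, hxΔ, ?_⟩
          rw [D.rho_mul, D.rho_mul, D.refl_act_self hxΔ.1.1, map_neg, ← hzx,
            neg_neg, D.rho_inv]

/-- Side 1 of the theorem. -/
lemma phiSub₁_eq (W' : Subgroup W) (hW' : D.IsReflectionSubgroup W') :
    D.PhiSub₁ W' = { v | ∃ w ∈ W', ∃ x ∈ D.Delta₁ W', v = D.ρ₁ w x } := by
  ext v
  constructor
  · rintro ⟨hvΦ, hvrefl⟩
    rcases D.pos_or_neg hvΦ with hp | hn
    · exact D.main₁ W' hW' (D.len (D.refl₁ v)) v ⟨hvΦ, hp.2⟩ hvrefl le_rfl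
    · have hneg' : -v ∈ D.PhiPos₁ := D.neg_mem_iff.mp hn
      have hrefln : D.refl₁ (-v) = D.refl₁ v := D.refl_neg hvΦ
      obtain ⟨w, hw, x, hxΔ, hzx⟩ := D.main₁ W' hW' (D.len (D.refl₁ (-v))) (-v)
        hneg' (by rw [hrefln]; exact hvrefl) le_rfl
      have hxW : D.refl₁ x ∈ W' := D.SW_mem_W' hxΔ.2
      refine ⟨w * D.refl₁ x, mul_mem hw hxW, x, hxΔ, ?_⟩
      rw [D.rho_mul, D.refl_act_self hxΔ.1.1, map_neg, ← hzx, neg_neg]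
  · rintro ⟨w, hw, x, hxΔ, rfl⟩
    refine ⟨D.Phi₁_stable hxΔ.1.1 w, ?_⟩
    rw [D.refl_conj hxΔ.1.1 w]
    exact mul_mem (mul_mem hw (D.SW_mem_W' hxΔ.2)) (inv_mem hw)

end Aux5
section Aux6
variable {S V₁ V₂ W : Type*} [AddCommGroup V₁] [Module ℝ V₁]
  [AddCommGroup V₂] [Module ℝ V₂] [Group W] (D : CoxeterDatum S V₁ V₂ W)

/-- The mirrored Coxeter datum, swapping the roles of `V₁` and `V₂`. -/
noncomputable def flip : CoxeterDatum S V₂ V₁ W where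
  pair := D.pair.flip
  α := D.β
  β := D.α
  α_inj := D.β_inj
  β_inj := D.α_inj
  D1 := fun s => by simpa using D.D1 s
  D2a := D.D2b
  D2b := D.D2a
  D2c := D.D2d
  D2d := D.D2c
  D3 := fun s t hst => by simpa using D.D3 t s (Ne.symm hst)
  D4 := fun s t h => by simpa using D.D4 t s (by simpa using h)
  D5 := fun s t hst => by simpa using D.D5 t s (Ne.symm hst)
  r := D.r
  r_gen := D.r_gen
  r_ne_one := D.r_ne_one
  r_sq := D.r_sq
  ρ₁ := D.ρ₂
  ρ₂ := D.ρ₁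
  ρ₁_inj := D.ρ₂_inj
  ρ₂_inj := D.ρ₁_inj
  hr₁ := fun s y => by simpa using D.hr₂ s y
  hr₂ := fun s x => by simpa using D.hr₁ s x
  pair_inv := fun w y x => by simpa using D.pair_inv w x y
  phi := D.phiInv
  phiInv := D.phi
  refl₁ := D.refl₂
  refl₂ := D.refl₁
  decomp₁ := D.decomp₂
  disj₁ := D.disj₂
  decomp₂ := D.decomp₁
  disj₂ := D.disj₁
  phi_mem := D.phiInv_mem
  phiInv_mem := D.phi_mem
  phiInv_phi := D.phi_phiInv
  phi_phiInv := D.phiInv_phi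
  phi_simple := fun s => by
    have h1 : D.α s ∈ {v | ∃ w s, v = D.ρ₁ w (D.α s)} := D.alpha_mem_Phi₁ s
    calc D.phiInv (D.β s) = D.phiInv (D.phi (D.α s)) := by rw [D.phi_simple]
    _ = D.α s := D.phiInv_phi _ h1
  phi_equiv := fun w y hy => by
    have hx : D.phiInv y ∈ {v | ∃ w s, v = D.ρ₁ w (D.α s)} := D.phiInv_mem y hy
    have hxy : D.phi (D.phiInv y) = y := D.phi_phiInv y hy
    calc D.phiInv (D.ρ₂ w y) = D.phiInv (D.ρ₂ w (D.phi (D.phiInv y))) := by rw [hxy]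
    _ = D.phiInv (D.phi (D.ρ₁ w (D.phiInv y))) := by
        rw [D.phi_equiv w (D.phiInv y) hx]
    _ = D.ρ₁ w (D.phiInv y) := D.phiInv_phi _ (D.Phi₁_stable hx w)
  refl₁_eq := D.refl₂_eq
  refl₂_eq := D.refl₁_eq
  refl₁_act := fun y hy v => by simpa using D.refl₂_act y hy v
  refl₂_act := fun x hx v => by simpa using D.refl₁_act x hx v

end Aux6
end CoxeterDatum
/-- For a reflection subgroup `W'` of `W` and each `i ∈ {1,2}`,
`Φᵢ(W') = W'·Δᵢ(W')`. -/
theorem stmt14 {S V₁ V₂ W : Type*} [AddCommGroup V₁] [Module ℝ V₁]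
    [AddCommGroup V₂] [Module ℝ V₂] [Group W]
    (D : CoxeterDatum S V₁ V₂ W)
    (W' : Subgroup W) (hW' : D.IsReflectionSubgroup W') :
    D.PhiSub₁ W' = { v | ∃ w ∈ W', ∃ x ∈ D.Delta₁ W', v = D.ρ₁ w x } ∧
    D.PhiSub₂ W' = { v | ∃ w ∈ W', ∃ y ∈ D.Delta₂ W', v = D.ρ₂ w y } := by
  constructor
  · exact D.phiSub₁_eq W' hW'
  · exact (D.flip).phiSub₁_eq W' hW'
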